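/- Let H : [0,1] × Z → Z be a continuous map on a topological space Z and Φ*_i : X → Z continuous maps on a compact space X, with Φ_i(x) := H(1, Φ*_i(x)). Suppose: (a) H(t, z) = z for all t whenever z lies in a closed subset S ⊂ Z ('stationary points'); (b) a functional M : Z → R is continuous, M(H(1,z)) < M(z) whenever z ∉ S, and M(H(1,z)) ≤ M(z) always. If z is a limit point of a sequence (Φ_{i_j}(x_j)) with M(Φ_{i_j}(x_j)) → L = limsup_i sup_x M(Φ_i(x)) = limsup_i sup_x M(Φ*_i(x)), then z ∈ S. -/
import Mathlib


/-- **pull-tight.** Let `H : [0,1] × Z → Z` be continuous on a (compact)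
metric space `Z`, `S ⊆ Z` a closed set of "stationary points" with `H(t,z) = z` for
`z ∈ S`, and `M : Z → ℝ` continuous with `M(H(1,z)) ≤ M(z)` always and
`M(H(1,z)) < M(z)` for `z ∉ S`.  Let `Φ*_i : X → Z` be continuous maps on a compact
space `X` and `Φ_i := H(1, ·) ∘ Φ*_i`, and suppose
`L = limsup_i sup_x M(Φ_i(x)) = limsup_i sup_x M(Φ*_i(x))`.  If `z` is the limit of a
sequence `Φ_{i_j}(x_j)` with `M(Φ_{i_j}(x_j)) → L`, then `z ∈ S`. -/
theorem stmt_14 {Z : Type*} [MetricSpace Z] [CompactSpace Z]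
    {X : Type*} [TopologicalSpace X] [CompactSpace X]
    (H : unitInterval → Z → Z)
    (hHcont : Continuous fun q : unitInterval × Z => H q.1 q.2)
    (S : Set Z) (hS : IsClosed S)
    (M : Z → ℝ) (hM : Continuous M)
    (ha : ∀ (t : unitInterval) (z : Z), z ∈ S → H t z = z)
    (hb1 : ∀ z : Z, z ∉ S → M (H 1 z) < M z)
    (hb2 : ∀ z : Z, M (H 1 z) ≤ M z)
    (Φs : ℕ → C(X, Z)) (L : ℝ)
    (hL1 : Filter.limsup (fun i => ⨆ x : X, M (H 1 (Φs i x))) Filter.atTop = L)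
    (hL2 : Filter.limsup (fun i => ⨆ x : X, M (Φs i x)) Filter.atTop = L)
    (ij : ℕ → ℕ) (hij : StrictMono ij) (xj : ℕ → X) (z : Z)
    (hz : Filter.Tendsto (fun j => H 1 (Φs (ij j) (xj j))) Filter.atTop (nhds z))
    (hML : Filter.Tendsto (fun j => M (H 1 (Φs (ij j) (xj j)))) Filter.atTop (nhds L)) :
    z ∈ S := by
  set w : ℕ → Z := fun j => Φs (ij j) (xj j) with hw
  have hH1 : Continuous (H 1) := hHcont.comp (Continuous.prodMk_right 1)
  -- lower bound for M
  obtain ⟨z0, -, hz0⟩ := isCompact_univ.exists_isMinOn ⟨z, Set.mem_univ z⟩ hM.continuousOn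
  have hlow : ∀ y : Z, M z0 ≤ M y := fun y => hz0 (Set.mem_univ y)
  -- boundedness below of the sup sequence
  haveI : Nonempty X := ⟨xj 0⟩
  obtain ⟨z1, -, hz1⟩ := isCompact_univ.exists_isMaxOn ⟨z, Set.mem_univ z⟩ hM.continuousOn
  have hbdd : Filter.IsBoundedUnder (· ≤ ·) Filter.atTop
      (fun i : ℕ => ⨆ x : X, M (Φs i x)) := by
    exact Filter.isBoundedUnder_of ⟨M z1, fun i => ciSup_le fun x => hz1 (Set.mem_univ ((Φs i) x))⟩
  -- extract convergent subsequence of w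
  obtain ⟨p, -, φ, hφ, hwp⟩ := isCompact_univ.tendsto_subseq (fun j => Set.mem_univ (w j))
  -- H 1 p = z
  have hH1p : H 1 p = z := by
    have h1 : Filter.Tendsto (fun k => H 1 (w (φ k))) Filter.atTop (nhds (H 1 p)) :=
      (hH1.tendsto p).comp hwp
    have h2 : Filter.Tendsto (fun k => H 1 (w (φ k))) Filter.atTop (nhds z) :=
      hz.comp hφ.tendsto_atTop
    exact tendsto_nhds_unique h1 h2
  -- M z = L
  have hMz : M z = L := by
    have := (hM.tendsto z).comp hz
    exact tendsto_nhds_unique this hML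
  -- M p ≤ L
  have hMp : M p ≤ L := by
    refine le_of_forall_pos_le_add fun ε hε => ?_
    have hlt : Filter.limsup (fun i => ⨆ x : X, M (Φs i x)) Filter.atTop < L + ε := by
      rw [hL2]; linarith
    have hev : ∀ᶠ i in Filter.atTop, (⨆ x : X, M (Φs i x)) < L + ε :=
      Filter.eventually_lt_of_limsup_lt hlt hbdd
    have hij' : Filter.Tendsto ij Filter.atTop Filter.atTop := hij.tendsto_atTop
    have hev2 : ∀ᶠ j in Filter.atTop, M (w j) < L + ε := by
      filter_upwards [hij'.eventually hev] with j hj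
      exact lt_of_le_of_lt
        (le_ciSup (isCompact_range (hM.comp (Φs (ij j)).continuous)).bddAbove (xj j)) hj
    have hMwp : Filter.Tendsto (fun k => M (w (φ k))) Filter.atTop (nhds (M p)) :=
      (hM.tendsto p).comp hwp
    exact le_of_tendsto hMwp ((hφ.tendsto_atTop.eventually hev2).mono fun k hk => hk.le)
  -- p ∈ S
  have hpS : p ∈ S := by
    by_contra hp
    have := hb1 p hp
    rw [hH1p, hMz] at this
    linarith
  have := ha 1 p hpS
  rw [this] at hH1p
  rwa [← hH1p]
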